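/- Let n, k be natural numbers and let κ, μ : Fin n → ℝ satisfy κ_α · κ_β = μ_α · μ_β for all indices α ≠ β. If there exists a natural number k ≥ 1 with σ_{2k+1}(κ) ≠ 0, then for every natural number l, σ_{2l+1}(κ) · σ_{2k+1}(κ) = σ_{2l+1}(μ) · σ_{2k+1}(μ), and consequently σ_{2l+1}(κ) = (σ_{2l+1}(μ) · σ_{2k+1}(μ)) / σ_{2k+1}(κ). -/

import Mathlib

/-- The `m`-th elementary symmetric function of the family `κ : Fin n → ℝ`:
the sum over all `m`-element subsets `S` of `Fin n` of `∏ i ∈ S, κ i`. -/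
noncomputable def esymmFun (n m : ℕ) (κ : Fin n → ℝ) : ℝ :=
  ∑ S ∈ Finset.powersetCard m (Finset.univ : Finset (Fin n)), ∏ i ∈ S, κ i

lemma esymm_smul (n m : ℕ) (t : ℝ) (κ : Fin n → ℝ) :
    esymmFun n m (fun i => t * κ i) = t ^ m * esymmFun n m κ := by
  unfold esymmFun
  rw [Finset.mul_sum]
  refine Finset.sum_congr rfl fun S hS => ?_
  rw [Finset.prod_mul_distrib, Finset.prod_const,
    (Finset.mem_powersetCard.mp hS).2]

theorem stmt_16 (n k : ℕ) (hk : 1 ≤ k) (κ μ : Fin n → ℝ)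
    (h : ∀ α β : Fin n, α ≠ β → κ α * κ β = μ α * μ β)
    (hne : esymmFun n (2 * k + 1) κ ≠ 0) :
    ∀ l : ℕ,
      esymmFun n (2 * l + 1) κ * esymmFun n (2 * k + 1) κ =
        esymmFun n (2 * l + 1) μ * esymmFun n (2 * k + 1) μ ∧
      esymmFun n (2 * l + 1) κ =
        esymmFun n (2 * l + 1) μ * esymmFun n (2 * k + 1) μ / esymmFun n (2 * k + 1) κ := by
  have hex : ∃ S ∈ Finset.powersetCard (2 * k + 1) (Finset.univ : Finset (Fin n)),
      ∏ i ∈ S, κ i ≠ 0 := by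
    by_contra hcon
    push_neg at hcon
    exact hne (Finset.sum_eq_zero hcon)
  obtain ⟨S, hS, hprod⟩ := hex
  have hcard : S.card = 2 * k + 1 := (Finset.mem_powersetCard.mp hS).2
  have hjmem : ∃ j, j ∈ S := Finset.card_pos.mp (by omega)
  obtain ⟨j, hj⟩ := hjmem
  have hcard' : 1 < (S.erase j).card := by
    rw [Finset.card_erase_of_mem hj]; omega
  obtain ⟨m, hm, p, hp, hmp⟩ := Finset.one_lt_card.mp hcard'
  have hmj : m ≠ j := (Finset.mem_erase.mp hm).1
  have hpj : p ≠ j := (Finset.mem_erase.mp hp).1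
  have hκ : ∀ i ∈ S, κ i ≠ 0 := Finset.prod_ne_zero_iff.mp hprod
  have hκj : κ j ≠ 0 := hκ j hj
  have hκm : κ m ≠ 0 := hκ m ((Finset.mem_erase.mp hm).2)
  have hκp : κ p ≠ 0 := hκ p ((Finset.mem_erase.mp hp).2)
  have h1 : κ j * κ m = μ j * μ m := h j m (fun e => hmj e.symm)
  have h2 : κ j * κ p = μ j * μ p := h j p (fun e => hpj e.symm)
  have h3 : κ m * κ p = μ m * μ p := h m p hmp
  have hμmp : μ m * μ p ≠ 0 := h3 ▸ mul_ne_zero hκm hκp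
  have hμj2 : μ j * μ j = κ j * κ j := by
    apply mul_right_cancel₀ hμmp
    linear_combination (-(μ j * μ p)) * h1 + (-(κ j * κ m)) * h2 + (κ j * κ j) * h3
  have hμj : μ j ≠ 0 := by
    intro h0
    apply mul_ne_zero hκj hκm
    rw [h1, h0, zero_mul]
  set t : ℝ := μ j / κ j with ht
  have ht2 : t * t = 1 := by
    rw [ht, div_mul_div_comm, hμj2, div_self (mul_ne_zero hκj hκj)]
  have htj : t * κ j = μ j := div_mul_cancel₀ (μ j) hκj
  have hμfun : μ = fun i => t * κ i := by
    funext i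
    by_cases hi : i = j
    · subst hi
      exact htj.symm
    · have hh : κ i * κ j = μ i * μ j := h i j hi
      apply mul_right_cancel₀ (mul_ne_zero hκj hμj)
      linear_combination (-(κ j)) * hh + (-(κ i)) * hμj2 + (-(κ i * μ j)) * htj
  intro l
  have hscale : ∀ r : ℕ, esymmFun n (2 * r + 1) μ = t * esymmFun n (2 * r + 1) κ := by
    intro r
    rw [hμfun, esymm_smul]
    congr 1
    calc t ^ (2 * r + 1) = (t * t) ^ r * t := by ring
    _ = t := by rw [ht2, one_pow, one_mul]
  have key : esymmFun n (2 * l + 1) κ * esymmFun n (2 * k + 1) κ =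
      esymmFun n (2 * l + 1) μ * esymmFun n (2 * k + 1) μ := by
    rw [hscale l, hscale k]
    calc esymmFun n (2 * l + 1) κ * esymmFun n (2 * k + 1) κ
        = (t * t) * (esymmFun n (2 * l + 1) κ * esymmFun n (2 * k + 1) κ) := by
          rw [ht2, one_mul]
      _ = t * esymmFun n (2 * l + 1) κ * (t * esymmFun n (2 * k + 1) κ) := by ring
  refine ⟨key, ?_⟩
  rw [← key, mul_div_assoc, div_self hne, mul_one]
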